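/- If Z_1, ..., Z_{n+1} are exchangeable real-valued random variables that are almost surely distinct, then the rank of Z_{n+1} among Z_1, ..., Z_{n+1} is uniformly distributed on {1, 2, ..., n+1}. -/

import Mathlib

open MeasureTheory Finset
open scoped ENNReal

private lemma rank_mono {m : ℕ} {v : Fin m → ℝ} {a b : Fin m} (h : v a < v b) :
    (univ.filter fun i => v i ≤ v a).card < (univ.filter fun i => v i ≤ v b).card := by
  apply Finset.card_lt_card
  constructor
  · intro i hi
    simp only [mem_filter, mem_univ, true_and] at hi ⊢
    exact hi.trans h.le
  · intro hsub
    have hb : b ∈ univ.filter fun i => v i ≤ v b := by simp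
    have := hsub hb
    simp only [mem_filter, mem_univ, true_and] at this
    exact absurd this (not_le.2 h)

private lemma rank_inj {m : ℕ} {v : Fin m → ℝ} (hv : Function.Injective v) :
    Function.Injective (fun j => (univ.filter fun i => v i ≤ v j).card) := by
  intro a b hab
  by_contra hne
  simp only at hab
  rcases lt_or_gt_of_ne (fun h => hne (hv h)) with h | h
  · exact absurd hab (rank_mono h).ne
  · exact absurd hab.symm (rank_mono h).ne

private lemma rank_surj {m : ℕ} {v : Fin (m + 1) → ℝ} (hv : Function.Injective v)
    {k : ℕ} (hk1 : 1 ≤ k) (hk2 : k ≤ m + 1) :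
    ∃ j, (univ.filter fun i => v i ≤ v j).card = k := by
  classical
  let r : Fin (m + 1) → ℕ := fun j => (univ.filter fun i => v i ≤ v j).card
  have h1 : ∀ j, 1 ≤ r j := fun j => Finset.card_pos.2 ⟨j, by simp⟩
  have h2 : ∀ j, r j ≤ m + 1 := fun j => le_trans (Finset.card_filter_le _ _) (by simp)
  let g : Fin (m + 1) → Fin (m + 1) :=
    fun j => ⟨r j - 1, by have := h1 j; have := h2 j; omega⟩
  have hginj : Function.Injective g := by
    intro a b hab
    have hv' : r a - 1 = r b - 1 := congrArg Fin.val hab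
    have ha := h1 a; have hb := h1 b
    exact rank_inj hv (show r a = r b by omega)
  obtain ⟨j, hj⟩ := Finite.surjective_of_injective hginj ⟨k - 1, by omega⟩
  have hj' : r j - 1 = k - 1 := congrArg Fin.val hj
  have hj1 := h1 j
  refine ⟨j, ?_⟩
  show r j = k
  omega

private lemma card_filter_equiv {α : Type*} [Fintype α] [DecidableEq α] (e : Equiv.Perm α)
    (q : α → Prop) [DecidablePred q] :
    (univ.filter fun i => q (e i)).card = (univ.filter q).card := by
  rw [← Fintype.card_subtype, ← Fintype.card_subtype]
  exact Fintype.card_congr (e.subtypeEquiv fun a => Iff.rfl)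

private lemma meas_count {Ω : Type*} [MeasurableSpace Ω] {m : ℕ} (Z : Fin m → Ω → ℝ)
    (h : ∀ i, Measurable (Z i)) (j : Fin m) :
    Measurable fun ω => (univ.filter fun i => Z i ω ≤ Z j ω).card := by
  simp_rw [Finset.card_filter]
  exact Finset.measurable_sum _ fun i _ =>
    Measurable.ite (measurableSet_le (h i) (h j)) measurable_const measurable_const

private lemma meas_count_pi {m : ℕ} (j : Fin m) :
    Measurable fun v : Fin m → ℝ => (univ.filter fun i => v i ≤ v j).card := by
  simp_rw [Finset.card_filter]
  exact Finset.measurable_sum _ fun i _ =>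
    Measurable.ite (measurableSet_le (measurable_pi_apply i) (measurable_pi_apply j))
      measurable_const measurable_const

/-- If `Z 0, ..., Z n` are exchangeable real-valued random variables that are almost
surely distinct, then the rank of the last one among all of them is uniformly
distributed on `{1, ..., n+1}`. -/
theorem stmt0 {Ω : Type*} [MeasurableSpace Ω] (μ : Measure Ω) [IsProbabilityMeasure μ]
    (n : ℕ) (Z : Fin (n + 1) → Ω → ℝ) (hmeas : ∀ i, Measurable (Z i))
    (hexch : ∀ e : Equiv.Perm (Fin (n + 1)),
      Measure.map (fun ω (i : Fin (n + 1)) => Z (e i) ω) μ =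
        Measure.map (fun ω (i : Fin (n + 1)) => Z i ω) μ)
    (hdist : ∀ i j, i ≠ j → μ {ω | Z i ω = Z j ω} = 0)
    (k : ℕ) (hk1 : 1 ≤ k) (hk2 : k ≤ n + 1) :
    μ {ω | (Finset.univ.filter fun i => Z i ω ≤ Z (Fin.last n) ω).card = k} =
      1 / (n + 1) := by
  set B : Fin (n + 1) → Set Ω :=
    fun j => {ω | (Finset.univ.filter fun i => Z i ω ≤ Z j ω).card = k} with hB
  have hmB : ∀ j, MeasurableSet (B j) :=
    fun j => (meas_count Z hmeas j) (measurableSet_singleton k)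
  -- the tie set is null
  set N : Set Ω := ⋃ (p : Fin (n + 1) × Fin (n + 1)), ⋃ (_ : p.1 ≠ p.2),
    {ω | Z p.1 ω = Z p.2 ω} with hNdef
  have hN : μ N = 0 :=
    measure_iUnion_null fun p => measure_iUnion_null fun hp => hdist _ _ hp
  have hinj : ∀ ω, ω ∉ N → Function.Injective fun i => Z i ω := by
    intro ω hω i j hij
    by_contra hne
    exact hω (Set.mem_iUnion.2 ⟨(i, j), Set.mem_iUnion.2 ⟨hne, hij⟩⟩)
  -- all B j have the same measure
  have hBeq : ∀ j, μ (B j) = μ (B (Fin.last n)) := by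
    intro j
    set e : Equiv.Perm (Fin (n + 1)) := Equiv.swap j (Fin.last n) with he
    have hS : MeasurableSet
        {v : Fin (n + 1) → ℝ | (univ.filter fun i => v i ≤ v (Fin.last n)).card = k} :=
      (meas_count_pi (Fin.last n)) (measurableSet_singleton k)
    have hφ : Measurable fun ω (i : Fin (n + 1)) => Z i ω :=
      measurable_pi_lambda _ hmeas
    have hψ : Measurable fun ω (i : Fin (n + 1)) => Z (e i) ω :=
      measurable_pi_lambda _ fun i => hmeas (e i)
    have h2 := congrArg (fun ν : Measure (Fin (n + 1) → ℝ) =>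
      ν {v | (univ.filter fun i => v i ≤ v (Fin.last n)).card = k}) (hexch e)
    simp only [Measure.map_apply hψ hS, Measure.map_apply hφ hS] at h2
    have hcc : ∀ ω : Ω, (univ.filter fun i => Z (e i) ω ≤ Z (e (Fin.last n)) ω).card
        = (univ.filter fun i => Z i ω ≤ Z j ω).card := by
      intro ω
      have h3 : e (Fin.last n) = j := Equiv.swap_apply_right _ _
      rw [h3]
      exact card_filter_equiv e fun i => Z i ω ≤ Z j ω
    have hpre : (fun ω (i : Fin (n + 1)) => Z (e i) ω) ⁻¹'
        {v | (univ.filter fun i => v i ≤ v (Fin.last n)).card = k} = B j := by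
      ext ω
      simp only [Set.mem_preimage, Set.mem_setOf_eq, hB, hcc ω]
    have hpre2 : (fun ω (i : Fin (n + 1)) => Z i ω) ⁻¹'
        {v | (univ.filter fun i => v i ≤ v (Fin.last n)).card = k} = B (Fin.last n) := rfl
    rw [hpre, hpre2] at h2
    exact h2
  -- the B j are a.e. disjoint
  have hdisj : Pairwise (Function.onFun (AEDisjoint μ) B) := by
    intro a b hab
    refine measure_mono_null (fun ω hω => ?_) hN
    by_contra hωN
    exact hab (rank_inj (hinj ω hωN) (hω.1.trans hω.2.symm))
  -- the B j cover a.e.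
  have hcover : μ (⋃ j, B j) = 1 := by
    have hsub : (⋃ j, B j)ᶜ ⊆ N := by
      intro ω hω
      by_contra hωN
      obtain ⟨j, hj⟩ := rank_surj (hinj ω hωN) hk1 hk2
      exact hω (Set.mem_iUnion.2 ⟨j, hj⟩)
    have h0 : μ (⋃ j, B j)ᶜ = 0 := measure_mono_null hsub hN
    have := prob_compl_eq_zero_iff (μ := μ) (MeasurableSet.iUnion hmB)
    exact this.1 h0
  -- sum up
  have hsum : ∑ j, μ (B j) = 1 := by
    rw [← tsum_fintype (L := SummationFilter.unconditional _), ← measure_iUnion₀ hdisj fun j => (hmB j).nullMeasurableSet]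
    exact hcover
  have hsum2 : ((n : ℝ≥0∞) + 1) * μ (B (Fin.last n)) = 1 := by
    have hc : ∑ j, μ (B j) = ∑ x : Fin (n + 1), μ (B (Fin.last n)) :=
      Finset.sum_congr rfl fun j _ => hBeq j
    rw [hc, Finset.sum_const, Finset.card_univ, Fintype.card_fin, nsmul_eq_mul] at hsum
    push_cast at hsum
    exact hsum
  have hfin : ((n : ℝ≥0∞) + 1) ≠ 0 := by simp
  have htop : ((n : ℝ≥0∞) + 1) ≠ ⊤ := by simp
  rw [show {ω | (Finset.univ.filter fun i => Z i ω ≤ Z (Fin.last n) ω).card = k}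
      = B (Fin.last n) from rfl]
  rw [ENNReal.eq_div_iff hfin htop]
  exact hsum2
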